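/- Let R be a finite commutative Frobenius ring of characteristic 2, let G be a finite group of order n with a fixed enumeration of its elements identifying indices with Z/nZ, let v1, v2 ∈ RG, and let A be an n×n reverse circulant matrix over R. Then the code C_σ generated by the rows of M(σ) is a self-dual code of length 4n if and only if (σ(v1+v2)+A)(σ((v1+v2)*)+A) = I_n and σ(v1)(σ((v1+v2)*)+A) = (σ(v1+v2)+A)σ(v1*). -/

import Mathlib

open Matrix

/-- The dual of a code (submodule of `ι → R`) with respect to the standard bilinear form. -/
def dualCode {R : Type*} [CommRing R] {ι : Type*} [Fintype ι]
    (C : Submodule R (ι → R)) : Submodule R (ι → R) where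
  carrier := {x | ∀ c ∈ C, ∑ i, x i * c i = 0}
  add_mem' := by
    intro a b ha hb c hc
    simp only [Set.mem_setOf_eq] at ha hb ⊢
    simp [Pi.add_apply, add_mul, Finset.sum_add_distrib, ha c hc, hb c hc]
  zero_mem' := by
    intro c hc
    simp
  smul_mem' := by
    intro r a ha c hc
    simp only [Set.mem_setOf_eq] at ha ⊢
    simp [Pi.smul_apply, smul_eq_mul, mul_assoc, ← Finset.mul_sum, ha c hc]

/-- A code is self-dual if it equals its dual. -/
def IsSelfDual {R : Type*} [CommRing R] {ι : Type*} [Fintype ι]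
    (C : Submodule R (ι → R)) : Prop :=
  C = dualCode C

/-- The code generated by the rows of a matrix. -/
def rowSpan {R : Type*} [CommRing R] {κ ι : Type*} (M : Matrix κ ι R) :
    Submodule R (ι → R) :=
  Submodule.span R (Set.range M)

/-- The matrix `σ(v)` of a group ring element `v` with respect to a fixed enumeration `e`
of the group elements: its `(i,j)` entry is the coefficient of `v` at `(e i)⁻¹ * (e j)`. -/
def sigma {R : Type*} [CommRing R] {G : Type*} [Group G] {ι : Type*}
    (e : ι ≃ G) (v : MonoidAlgebra R G) : Matrix ι ι R :=
  Matrix.of fun i j => v.coeff ((e i)⁻¹ * e j)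

/-- The canonical involution `v ↦ v* = ∑ α_g g⁻¹` on a group ring. -/
def invol {R : Type*} [CommRing R] {G : Type*} [Group G]
    (v : MonoidAlgebra R G) : MonoidAlgebra R G :=
  MonoidAlgebra.ofCoeff (Finsupp.equivMapDomain (Equiv.inv G) v.coeff)

/-- A matrix indexed by `ZMod n` is reverse circulant if its `(i,j)` entry
depends only on `i + j`. -/
def IsRevCirculant {R : Type*} {n : ℕ} (A : Matrix (ZMod n) (ZMod n) R) : Prop :=
  ∃ a : ZMod n → R, ∀ i j, A i j = a (i + j)

/-- A matrix indexed by `ZMod n` is circulant if its `(i,j)` entry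
depends only on `j - i`. -/
def IsCirculant {R : Type*} {n : ℕ} (A : Matrix (ZMod n) (ZMod n) R) : Prop :=
  ∃ a : ZMod n → R, ∀ i j, A i j = a (j - i)

/- ### Auxiliary lemmas -/

lemma mem_dual_rowSpan_iff {R : Type*} [CommRing R] {κ ι : Type*} [Fintype κ] [Fintype ι]
    (M : Matrix κ ι R) (x : ι → R) :
    x ∈ dualCode (rowSpan M) ↔ ∀ k, ∑ j, x j * M k j = 0 := by
  constructor
  · exact fun h k => h (M k) (Submodule.subset_span ⟨k, rfl⟩)
  · intro h c hc
    obtain ⟨d, rfl⟩ := (Submodule.mem_span_range_iff_exists_fun R).mp hc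
    calc ∑ j, x j * (∑ i, d i • M i) j
        = ∑ i, d i * ∑ j, x j * M i j := by
          simp only [Finset.sum_apply, Pi.smul_apply, smul_eq_mul, Finset.mul_sum]
          rw [Finset.sum_comm]
          exact Finset.sum_congr rfl fun i _ => Finset.sum_congr rfl fun j _ => by ring
      _ = 0 := by simp [h]

lemma rowSpan_le_dual_iff {R : Type*} [CommRing R] {κ ι : Type*} [Fintype κ] [Fintype ι]
    (M : Matrix κ ι R) :
    rowSpan M ≤ dualCode (rowSpan M) ↔ M * Mᵀ = 0 := by
  constructor
  · intro h
    ext k i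
    have := (mem_dual_rowSpan_iff M (M k)).mp (h (Submodule.subset_span ⟨k, rfl⟩)) i
    simpa [Matrix.mul_apply, mul_comm] using this
  · intro h
    rw [rowSpan, Submodule.span_le]
    rintro - ⟨k, rfl⟩
    refine (mem_dual_rowSpan_iff M (M k)).mpr fun i => ?_
    have := congrFun (congrFun h k) i
    simpa [Matrix.mul_apply, mul_comm] using this

lemma isSelfDual_fromColumns_iff {R : Type*} [CommRing R] {κ : Type*} [Fintype κ]
    [DecidableEq κ] (X : Matrix κ κ R) :
    IsSelfDual (rowSpan (fromCols (1 : Matrix κ κ R) X)) ↔ X * Xᵀ = -1 := by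
  have hMM : fromCols (1 : Matrix κ κ R) X * (fromCols (1 : Matrix κ κ R) X)ᵀ
      = 1 + X * Xᵀ := by
    rw [transpose_fromCols, fromCols_mul_fromRows, transpose_one, mul_one]
  constructor
  · intro h
    have hle : rowSpan (fromCols 1 X) ≤ dualCode (rowSpan (fromCols 1 X)) := le_of_eq h
    have h0 := (rowSpan_le_dual_iff _).mp hle
    rw [hMM] at h0
    exact eq_neg_of_add_eq_zero_right h0
  · intro hX
    have h0 : fromCols (1 : Matrix κ κ R) X * (fromCols (1 : Matrix κ κ R) X)ᵀ = 0 := by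
      rw [hMM, hX]; abel
    have hXtX : Xᵀ * X = -1 := by
      have h1 : X * (-Xᵀ) = 1 := by rw [mul_neg, hX, neg_neg]
      have h2 := mul_eq_one_comm.mp h1
      rw [neg_mul] at h2
      exact neg_eq_iff_eq_neg.mp h2
    apply le_antisymm ((rowSpan_le_dual_iff _).mpr h0)
    intro x hx
    rw [mem_dual_rowSpan_iff] at hx
    have hx' : ∀ k, x (Sum.inl k) + ∑ j, x (Sum.inr j) * X k j = 0 := by
      intro k
      have := hx k
      simpa [Fintype.sum_sum_type, Matrix.one_apply, Finset.sum_ite_eq', mul_comm] using this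
    rw [rowSpan]
    refine (Submodule.mem_span_range_iff_exists_fun R).mpr ?_
    refine ⟨fun i => x (Sum.inl i), funext fun j => ?_⟩
    have hsum : ∀ j : κ ⊕ κ, (∑ i, x (Sum.inl i) • fromCols 1 X i) j
        = ∑ i, x (Sum.inl i) * fromCols 1 X i j := by
      intro j; simp [Finset.sum_apply]
    rw [hsum]
    cases j with
    | inl j =>
        simp [fromCols_apply_inl, Matrix.one_apply, Finset.sum_ite_eq']
    | inr j =>
        simp only [fromCols_apply_inr]
        have hxl : ∀ i, x (Sum.inl i) = -∑ k, x (Sum.inr k) * X i k :=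
          fun i => eq_neg_of_add_eq_zero_left (hx' i)
        calc ∑ i, x (Sum.inl i) * X i j
            = ∑ i, (-∑ k, x (Sum.inr k) * X i k) * X i j := by
              exact Finset.sum_congr rfl fun i _ => by rw [hxl i]
          _ = -∑ k, x (Sum.inr k) * ∑ i, X i k * X i j := by
              simp only [neg_mul, Finset.sum_neg_distrib, Finset.sum_mul, Finset.mul_sum,
                mul_assoc]
              rw [Finset.sum_comm]
          _ = -∑ k, x (Sum.inr k) * (Xᵀ * X) k j := by
              simp [Matrix.mul_apply]
          _ = x (Sum.inr j) := by
              rw [hXtX]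
              simp [Matrix.one_apply, Finset.sum_ite_eq']

lemma char2_aux {M : Type*} [AddCommGroup M] (h2 : ∀ x : M, x + x = 0)
    {s t u w one : M} :
    (s + t = one ∧ u + w = 0 ∧ w + u = 0 ∧ t + s = one) ↔
      (s + u + w + t = one ∧ s + u = s + w) := by
  have huw : ∀ {a b : M}, a + b = 0 → a = b := by
    intro a b hab
    have h := congrArg (· + b) hab
    simpa [add_assoc, h2 b] using h
  constructor
  · rintro ⟨h1, hq, -, -⟩
    have heq : u = w := huw hq
    constructor
    · calc s + u + w + t = (s + t) + (u + w) := by abel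
        _ = one := by rw [h1, hq, add_zero]
    · rw [heq]
  · rintro ⟨h1, h2'⟩
    have heq : u = w := add_left_cancel h2'
    have hq : u + w = 0 := by rw [heq]; exact h2 w
    have h1' : s + t = one := by
      calc s + t = s + t + (u + w) := by rw [hq, add_zero]
        _ = s + u + w + t := by abel
        _ = one := h1
    exact ⟨h1', hq, by rw [heq]; exact h2 w, by rw [add_comm]; exact h1'⟩

lemma sigma_add {R : Type*} [CommRing R] {G : Type*} [Group G] {ι : Type*}
    (e : ι ≃ G) (u v : MonoidAlgebra R G) :
    sigma e (u + v) = sigma e u + sigma e v := by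
  ext i j
  show (u + v).coeff _ = _
  rw [MonoidAlgebra.coeff_add, Finsupp.add_apply]
  rfl

lemma sigma_transpose {R : Type*} [CommRing R] {G : Type*} [Group G] {ι : Type*}
    (e : ι ≃ G) (v : MonoidAlgebra R G) :
    (sigma e v)ᵀ = sigma e (invol v) := by
  ext i j
  simp [sigma, invol, MonoidAlgebra.coeff_ofCoeff, Finsupp.equivMapDomain_apply, Equiv.inv, _root_.mul_inv_rev]

theorem selfDual_sigma_construction
    {R : Type*} [CommRing R] [Fintype R] [CharP R 2]
    (hFrob : Module.Injective R R)
    {n : ℕ} [NeZero n] {G : Type*} [Group G] [Fintype G] (e : ZMod n ≃ G)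
    (v1 v2 : MonoidAlgebra R G) (A : Matrix (ZMod n) (ZMod n) R)
    (hA : IsRevCirculant A) :
    IsSelfDual (rowSpan (Matrix.fromCols (1 : Matrix (ZMod n ⊕ ZMod n) (ZMod n ⊕ ZMod n) R)
        (Matrix.fromBlocks (sigma e v1) (sigma e v2 + A) (sigma e v2 + A) (sigma e v1)))) ↔
      ((sigma e (v1 + v2) + A) * (sigma e (invol (v1 + v2)) + A) = 1 ∧
        sigma e v1 * (sigma e (invol (v1 + v2)) + A) =
          (sigma e (v1 + v2) + A) * sigma e (invol v1)) := by
  set B := sigma e v1 with hB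
  set C0 := sigma e v2 + A with hC0
  have hAt : Aᵀ = A := by
    obtain ⟨a, ha⟩ := hA
    ext i j
    simp [Matrix.transpose_apply, ha, add_comm]
  have hBt : Bᵀ = sigma e (invol v1) := sigma_transpose e v1
  have hC0t : C0ᵀ = (sigma e v2)ᵀ + A := by rw [hC0, Matrix.transpose_add, hAt]
  have hD : sigma e (v1 + v2) + A = B + C0 := by rw [sigma_add]; exact add_assoc _ _ _
  have hDt : sigma e (invol (v1 + v2)) + A = Bᵀ + C0ᵀ := by
    rw [← sigma_transpose, sigma_add, Matrix.transpose_add, hC0t]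
    abel
  rw [hD, hDt, ← hBt]
  rw [isSelfDual_fromColumns_iff]
  have hneg : (-1 : Matrix (ZMod n ⊕ ZMod n) (ZMod n ⊕ ZMod n) R) = 1 := by
    ext i j
    simp [CharTwo.neg_eq]
  rw [hneg, fromBlocks_transpose, fromBlocks_multiply, ← fromBlocks_one]
  have hinj : ∀ (P Q Q' P' : Matrix (ZMod n) (ZMod n) R),
      fromBlocks P Q Q' P' = fromBlocks 1 0 0 1 ↔ (P = 1 ∧ Q = 0 ∧ Q' = 0 ∧ P' = 1) := by
    intro P Q Q' P'
    constructor
    · intro h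
      refine ⟨?_, ?_, ?_, ?_⟩
      · have := congrArg Matrix.toBlocks₁₁ h; simpa only [Matrix.toBlocks_fromBlocks₁₁] using this
      · have := congrArg Matrix.toBlocks₁₂ h; simpa only [Matrix.toBlocks_fromBlocks₁₂] using this
      · have := congrArg Matrix.toBlocks₂₁ h; simpa only [Matrix.toBlocks_fromBlocks₂₁] using this
      · have := congrArg Matrix.toBlocks₂₂ h; simpa only [Matrix.toBlocks_fromBlocks₂₂] using this
    · rintro ⟨rfl, rfl, rfl, rfl⟩; rfl
  rw [hinj]
  have hexp1 : (B + C0) * (Bᵀ + C0ᵀ) = B * Bᵀ + B * C0ᵀ + C0 * Bᵀ + C0 * C0ᵀ := by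
    rw [add_mul, mul_add, mul_add]; abel
  rw [hexp1, mul_add B, add_mul B C0]
  exact char2_aux (fun M => by ext i j; simp [Matrix.add_apply, CharTwo.add_self_eq_zero])
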